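/- For any vectors u, x, y in ℝ^{n+1} (with the standard inner product), we have ‖(u·x)·y − (u·y)·x‖ ≤ ‖u‖·‖x ∧ y‖, where ‖x ∧ y‖² = ‖x‖²‖y‖² − (x·y)². -/
import Mathlib


open RealInnerProductSpace

/-- For any `u, x, y` in Euclidean space,
`‖(u·x) y - (u·y) x‖ ≤ ‖u‖ ‖x ∧ y‖` where `‖x ∧ y‖ = √(‖x‖²‖y‖² - (x·y)²)`. -/
theorem stmt8 (n : ℕ) (u x y : EuclideanSpace ℝ (Fin (n + 1))) :
    ‖⟪u, x⟫ • y - ⟪u, y⟫ • x‖ ≤ ‖u‖ * Real.sqrt (‖x‖ ^ 2 * ‖y‖ ^ 2 - ⟪x, y⟫ ^ 2) := by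
  set A := ⟪u, x⟫ with hA
  set B := ⟪u, y⟫ with hB
  set C := ⟪x, y⟫ with hC
  set X := ‖x‖ ^ 2 with hX
  set Y := ‖y‖ ^ 2 with hY
  set v : EuclideanSpace ℝ (Fin (n + 1)) := A • y - B • x with hv
  set w : EuclideanSpace ℝ (Fin (n + 1)) := (A * Y - B * C) • x - (A * C - B * X) • y
    with hw
  have hxy : ⟪y, x⟫ = C := by rw [real_inner_comm]
  have hXx : ⟪x, x⟫ = X := real_inner_self_eq_norm_sq x
  have hYy : ⟪y, y⟫ = Y := real_inner_self_eq_norm_sq y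
  have hD : 0 ≤ X * Y - C ^ 2 := by
    nlinarith [abs_real_inner_le_norm x y, sq_abs C, abs_nonneg C,
      mul_nonneg (norm_nonneg x) (norm_nonneg y)]
  have hv2 : ‖v‖ ^ 2 = A ^ 2 * Y - 2 * A * B * C + B ^ 2 * X := by
    rw [← real_inner_self_eq_norm_sq]
    simp only [hv, inner_sub_left, inner_sub_right, real_inner_smul_left,
      real_inner_smul_right, hxy, hXx, hYy, hC]
    ring
  have hw2 : ‖w‖ ^ 2 = (A ^ 2 * Y - 2 * A * B * C + B ^ 2 * X) * (X * Y - C ^ 2) := by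
    rw [← real_inner_self_eq_norm_sq]
    simp only [hw, inner_sub_left, inner_sub_right, real_inner_smul_left,
      real_inner_smul_right, hxy, hXx, hYy, hC]
    ring
  have huw : ⟪u, w⟫ = A ^ 2 * Y - 2 * A * B * C + B ^ 2 * X := by
    simp only [hw, inner_sub_right, real_inner_smul_right, ← hA, ← hB]
    ring
  have hCS : ⟪u, w⟫ ≤ ‖u‖ * ‖w‖ := real_inner_le_norm u w
  have hkey : ‖v‖ ^ 2 ≤ ‖u‖ ^ 2 * (X * Y - C ^ 2) := by
    have hCS2 : ⟪u, w⟫ ^ 2 ≤ ‖u‖ ^ 2 * ‖w‖ ^ 2 := by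
      nlinarith [real_inner_le_norm u w, neg_abs_le ⟪u, w⟫, abs_real_inner_le_norm u w,
        sq_abs ⟪u, w⟫, mul_nonneg (norm_nonneg u) (norm_nonneg w)]
    rw [huw, hw2] at hCS2
    rw [hv2]
    nlinarith [sq_nonneg ‖v‖, hv2, sq_nonneg ‖u‖, mul_nonneg (sq_nonneg ‖u‖) hD,
      sq_nonneg (A ^ 2 * Y - 2 * A * B * C + B ^ 2 * X)]
  have hrhs : ‖u‖ * Real.sqrt (X * Y - C ^ 2) = Real.sqrt (‖u‖ ^ 2 * (X * Y - C ^ 2)) := by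
    rw [Real.sqrt_mul (sq_nonneg ‖u‖), Real.sqrt_sq (norm_nonneg u)]
  rw [show ‖⟪u, x⟫ • y - ⟪u, y⟫ • x‖ = ‖v‖ from rfl, hrhs]
  calc ‖v‖ = Real.sqrt (‖v‖ ^ 2) := (Real.sqrt_sq (norm_nonneg v)).symm
    _ ≤ _ := Real.sqrt_le_sqrt hkey
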